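/- There exist sets S, B ⊆ ℝ such that B has Lebesgue measure zero, S has infinite Lebesgue measure, and for every x ∈ S there exists r > 0 with {x - r, x + r} ⊆ B. -/

import Mathlib

open Set MeasureTheory Filter

/-- Midpoint set of `A`. -/
def midSet (A : Set ℝ) : Set ℝ :=
  {z | ∃ x ∈ A, ∃ y ∈ A, x ≠ y ∧ z = (x + y) / 2}

/-- `cantorStage n` is the `(n+1)`-st stage `C_{n+1}` of the middle-thirds Cantor
construction, so `cantorStage 0 = C₁ = [0,1/3] ∪ [2/3,1]`. -/
def cantorStage : ℕ → Set ℝ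
  | 0 => Icc 0 (1/3) ∪ Icc (2/3) 1
  | n + 1 => (fun x => x / 3) '' cantorStage n ∪ (fun x => 2/3 + x / 3) '' cantorStage n

/-- The middle-thirds Cantor set. -/
def cantorSet' : Set ℝ := ⋂ n, cantorStage n

lemma cantorStage_subset_Icc (n : ℕ) : cantorStage n ⊆ Icc (0:ℝ) 1 := by
  induction n with
  | zero =>
    rintro x (hx | hx) <;> constructor <;> [linarith [hx.1]; linarith [hx.2];
      linarith [hx.1]; exact hx.2]
  | succ n ih =>
    rintro x (⟨y, hy, rfl⟩ | ⟨y, hy, rfl⟩) <;> obtain ⟨h1, h2⟩ := ih hy <;>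
      constructor <;> simp only <;> linarith

lemma cantorStage_antitone (n : ℕ) : cantorStage (n+1) ⊆ cantorStage n := by
  induction n with
  | zero =>
    rintro x (⟨y, hy, rfl⟩ | ⟨y, hy, rfl⟩) <;>
      obtain ⟨h1, h2⟩ := cantorStage_subset_Icc 0 hy
    · exact Or.inl ⟨by positivity, by simp only; linarith⟩
    · exact Or.inr ⟨by simp only; linarith, by simp only; linarith⟩
  | succ n ih =>
    rintro x (⟨y, hy, rfl⟩ | ⟨y, hy, rfl⟩)
    · exact Or.inl ⟨y, ih hy, rfl⟩
    · exact Or.inr ⟨y, ih hy, rfl⟩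

lemma cantorStage_isCompact (n : ℕ) : IsCompact (cantorStage n) := by
  induction n with
  | zero => exact isCompact_Icc.union isCompact_Icc
  | succ n ih =>
    exact (ih.image (continuous_id.div_const 3)).union
      (ih.image (continuous_const.add (continuous_id.div_const 3)))

lemma cantorStage_sum (n : ℕ) : ∀ t ∈ Icc (0:ℝ) 2,
    ∃ a ∈ cantorStage n, ∃ b ∈ cantorStage n, a + b = t := by
  induction n with
  | zero =>
    rintro t ⟨h0, h2⟩
    rcases le_or_gt t (2/3) with h | h
    · exact ⟨t/2, Or.inl ⟨by linarith, by linarith⟩, t/2,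
        Or.inl ⟨by linarith, by linarith⟩, by ring⟩
    rcases le_or_gt t (4/3) with h' | h'
    · refine ⟨max 0 (t - 1), Or.inl ⟨le_max_left _ _, ?_⟩, t - max 0 (t-1),
        Or.inr ⟨?_, ?_⟩, by ring⟩
      · exact max_le (by linarith) (by linarith)
      · have : max 0 (t-1) ≤ t - 2/3 := max_le (by linarith) (by linarith)
        linarith
      · have : t - 1 ≤ max 0 (t-1) := le_max_right _ _
        linarith
    · exact ⟨t/2, Or.inr ⟨by linarith, by linarith⟩, t/2,
        Or.inr ⟨by linarith, by linarith⟩, by ring⟩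
  | succ n ih =>
    rintro t ⟨h0, h2⟩
    rcases le_or_gt t (2/3) with h | h
    · obtain ⟨a, ha, b, hb, hab⟩ := ih (3*t) ⟨by linarith, by linarith⟩
      exact ⟨a/3, Or.inl ⟨a, ha, rfl⟩, b/3, Or.inl ⟨b, hb, rfl⟩, by
        field_simp; linarith⟩
    rcases le_or_gt t (4/3) with h' | h'
    · obtain ⟨a, ha, b, hb, hab⟩ := ih (3*t - 2) ⟨by linarith, by linarith⟩
      exact ⟨a/3, Or.inl ⟨a, ha, rfl⟩, 2/3 + b/3, Or.inr ⟨b, hb, rfl⟩, by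
        field_simp; linarith⟩
    · obtain ⟨a, ha, b, hb, hab⟩ := ih (3*t - 4) ⟨by linarith, by linarith⟩
      exact ⟨2/3 + a/3, Or.inr ⟨a, ha, rfl⟩, 2/3 + b/3, Or.inr ⟨b, hb, rfl⟩, by
        field_simp; linarith⟩

lemma cantorSet'_sum : ∀ t ∈ Icc (0:ℝ) 2,
    ∃ a ∈ cantorSet', ∃ b ∈ cantorSet', a + b = t := by
  intro t ht
  set K : ℕ → Set (ℝ × ℝ) := fun n =>
    (cantorStage n ×ˢ cantorStage n) ∩ {p | p.1 + p.2 = t} with hK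
  have hcl : ∀ n, IsClosed (K n) := fun n =>
    (((cantorStage_isCompact n).isClosed.prod
      (cantorStage_isCompact n).isClosed)).inter
      (isClosed_eq (continuous_fst.add continuous_snd) continuous_const)
  have hcomp : IsCompact (K 0) :=
    (((cantorStage_isCompact 0).prod (cantorStage_isCompact 0))).inter_right
      (isClosed_eq (continuous_fst.add continuous_snd) continuous_const)
  have hne : ∀ n, (K n).Nonempty := by
    intro n
    obtain ⟨a, ha, b, hb, hab⟩ := cantorStage_sum n t ht
    exact ⟨(a, b), ⟨ha, hb⟩, hab⟩
  have hmono : ∀ n, K (n+1) ⊆ K n := fun n =>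
    inter_subset_inter_left _
      (prod_mono (cantorStage_antitone n) (cantorStage_antitone n))
  obtain ⟨p, hp⟩ := IsCompact.nonempty_iInter_of_sequence_nonempty_isCompact_isClosed
    K hmono hne hcomp hcl
  simp only [mem_iInter, hK, mem_inter_iff, mem_prod, mem_setOf_eq] at hp
  refine ⟨p.1, ?_, p.2, ?_, (hp 0).2⟩
  · exact mem_iInter.2 fun n => (hp n).1.1
  · exact mem_iInter.2 fun n => (hp n).1.2

lemma image_div3 (s : Set ℝ) : (fun x : ℝ => x / 3) '' s = (fun x : ℝ => 3 * x) ⁻¹' s := by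
  ext y
  constructor
  · rintro ⟨x, hx, rfl⟩; simpa [mul_div_cancel₀] using hx
  · intro hy; exact ⟨3 * y, hy, by ring⟩

lemma cantorStage_volume (n : ℕ) :
    volume (cantorStage n) ≤ ENNReal.ofReal ((2/3)^(n+1)) := by
  induction n with
  | zero =>
    refine (measure_union_le _ _).trans ?_
    rw [Real.volume_Icc, Real.volume_Icc, ← ENNReal.ofReal_add (by norm_num) (by norm_num)]
    exact ENNReal.ofReal_le_ofReal (by norm_num)
  | succ n ih =>
    refine (measure_union_le _ _).trans ?_
    have h1 : volume ((fun x : ℝ => x / 3) '' cantorStage n)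
        = ENNReal.ofReal (1/3) * volume (cantorStage n) := by
      rw [image_div3, Real.volume_preimage_mul_left (by norm_num : (3:ℝ) ≠ 0)]
      rw [show |(3:ℝ)⁻¹| = 1/3 from by rw [abs_of_pos] <;> norm_num]
    have h2 : volume ((fun x : ℝ => 2/3 + x / 3) '' cantorStage n)
        = ENNReal.ofReal (1/3) * volume (cantorStage n) := by
      have : (fun x : ℝ => 2/3 + x / 3) '' cantorStage n
          = (fun x : ℝ => (-(2/3):ℝ) + x) ⁻¹' ((fun x : ℝ => x / 3) '' cantorStage n) := by
        ext y
        constructor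
        · rintro ⟨x, hx, rfl⟩
          exact ⟨x, hx, by simp only; ring⟩
        · rintro ⟨x, hx, hxy⟩
          exact ⟨x, hx, by simp only at hxy ⊢; linarith⟩
      rw [this, measure_preimage_add, h1]
    rw [h1, h2, ← two_mul]
    calc 2 * (ENNReal.ofReal (1/3) * volume (cantorStage n))
        ≤ 2 * (ENNReal.ofReal (1/3) * ENNReal.ofReal ((2/3)^(n+1))) := by
          gcongr
      _ = ENNReal.ofReal (2 * ((1/3) * (2/3)^(n+1))) := by
          rw [← ENNReal.ofReal_mul (by norm_num), ← ENNReal.ofReal_ofNat 2,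
            ← ENNReal.ofReal_mul (by norm_num)]
      _ = ENNReal.ofReal ((2/3)^(n+1+1)) := by ring_nf
  
lemma cantorSet'_volume : volume cantorSet' = 0 := by
  have hle : ∀ n : ℕ, volume cantorSet' ≤ ENNReal.ofReal ((2/3)^(n+1)) := fun n =>
    (measure_mono (iInter_subset _ n)).trans (cantorStage_volume n)
  have htend : Tendsto (fun n : ℕ => ENNReal.ofReal ((2/3:ℝ)^(n+1))) atTop (nhds 0) := by
    have : Tendsto (fun n : ℕ => ((2/3:ℝ))^n) atTop (nhds 0) :=
      tendsto_pow_atTop_nhds_zero_of_lt_one (by norm_num) (by norm_num)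
    have := (ENNReal.continuous_ofReal.tendsto 0).comp
      (this.comp (tendsto_add_atTop_nat 1))
    simpa [Function.comp_def] using this
  exact le_antisymm (ge_of_tendsto' htend hle) (zero_le)

theorem stmt_7 :
    ∃ S B : Set ℝ, volume B = 0 ∧ volume S = ⊤ ∧
      ∀ x ∈ S, ∃ r > (0:ℝ), {x - r, x + r} ⊆ B := by
  refine ⟨univ, ⋃ n : ℤ, (fun x : ℝ => (n:ℝ) + x) ⁻¹' cantorSet', ?_, Real.volume_univ, ?_⟩
  · exact measure_iUnion_null fun n => by
      rw [measure_preimage_add]; exact cantorSet'_volume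
  · intro x _
    set m : ℤ := ⌊2*x⌋ with hm
    have ht : 2*x - m ∈ Icc (0:ℝ) 2 := by
      constructor
      · linarith [Int.floor_le (2*x)]
      · linarith [Int.lt_floor_add_one (2*x)]
    obtain ⟨a, ha, b, hb, hab⟩ := cantorSet'_sum _ ht
    have ha01 : a ∈ Icc (0:ℝ) 1 := cantorStage_subset_Icc 0 (mem_iInter.1 ha 0)
    have hb01 : b ∈ Icc (0:ℝ) 1 := cantorStage_subset_Icc 0 (mem_iInter.1 hb 0)
    set N : ℤ := |m| + 1 with hN
    refine ⟨x - (a - N), ?_, ?_⟩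
    · have hmN : (2:ℝ) ≤ (m:ℝ) + 2*N := by
        have h1 : -|(m:ℝ)| ≤ (m:ℝ) := neg_abs_le _
        have h2 : (0:ℝ) ≤ |(m:ℝ)| := abs_nonneg _
        push_cast [hN]
        linarith
      have : a - N ≤ x - 1/2 := by
        have hbma : b - a ≥ -1 := by linarith [ha01.2, hb01.1]
        linarith [hab]
      linarith
    · intro y hy
      simp only [mem_insert_iff, mem_singleton_iff] at hy
      rcases hy with rfl | rfl
      · -- x - (x - (a - N)) = a - N
        refine mem_iUnion.2 ⟨N, ?_⟩
        simp only [mem_preimage]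
        have : (N:ℝ) + (x - (x - (a - N))) = a := by ring
        rw [this]; exact ha
      · -- x + (x - (a - N)) = 2x - a + N = b + m + N
        refine mem_iUnion.2 ⟨-(m + N), ?_⟩
        simp only [mem_preimage]
        have h2x : 2*x = a + b + m := by linarith [hab]
        have : ((-(m+N) : ℤ) : ℝ) + (x + (x - (a - N))) = b := by
          push_cast; linarith
        rw [this]; exact hb
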